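/- Let P and Q be two homothetic regular m-gons in R^2 with common center O, Q = λ·P for some λ ∈ (0,1), with corresponding vertices of P and Q joined by segments. Given any line L in the plane, if λ is sufficiently close to 1 (depending only on m), then L intersects the interiors of at most 4 of the m trapezoidal 'ring' regions between P and Q. -/

import Mathlib

set_option maxHeartbeats 1000000


open scoped RealInnerProductSpace

noncomputable section

abbrev E2 := EuclideanSpace ℝ (Fin 2)

namespace Stmt16Aux

lemma inner2 (a b c d : ℝ) :
    ⟪((WithLp.equiv 2 (Fin 2 → ℝ)).symm ![a,b] : E2),
      (WithLp.equiv 2 (Fin 2 → ℝ)).symm ![c,d]⟫ = a*c + b*d := by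
  simp [PiLp.inner_apply, Fin.sum_univ_two, RCLike.inner_apply]; ring

/-- outer vertex with index `a` (as a natural number). -/
def V (m : ℕ) (ρ φ : ℝ) (a : ℕ) : E2 :=
  (WithLp.equiv 2 (Fin 2 → ℝ)).symm
    ![ρ * Real.cos (φ + 2 * Real.pi * a / m), ρ * Real.sin (φ + 2 * Real.pi * a / m)]

/-- outward unit normal of edge `b`. -/
def U (m : ℕ) (φ : ℝ) (b : ℕ) : E2 :=
  (WithLp.equiv 2 (Fin 2 → ℝ)).symm
    ![Real.cos (φ + (2*b+1) * Real.pi / m), Real.sin (φ + (2*b+1) * Real.pi / m)]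

lemma innerVU (m : ℕ) (hm : (m:ℝ) ≠ 0) (ρ φ : ℝ) (a b : ℕ) :
    ⟪V m ρ φ a, U m φ b⟫ = ρ * Real.cos ((2*(a:ℝ) - 2*b - 1) * Real.pi / m) := by
  simp only [V, U]
  rw [inner2, show (2*(a:ℝ) - 2*b - 1) * Real.pi / m
      = (φ + 2 * Real.pi * a / m) - (φ + (2*(b:ℝ)+1) * Real.pi / m) from by
        field_simp; ring, Real.cos_sub]
  ring

lemma cos_shift (nR x y : ℝ) (z : ℤ) (hn : nR ≠ 0) (h : x = y + 2*z*nR) :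
    Real.cos (x * Real.pi / nR) = Real.cos (y * Real.pi / nR) := by
  rw [h, show (y + 2*(z:ℝ)*nR) * Real.pi / nR = y * Real.pi / nR + (z:ℝ) * (2*Real.pi) from by
    field_simp]
  exact Real.cos_add_int_mul_two_pi _ z

lemma cos_bound (nR : ℝ) (hn5 : 5 ≤ nR) (x : ℝ) (h3 : 3 ≤ x) (hx : x ≤ 2*nR - 3) :
    Real.cos (x * Real.pi / nR) ≤ Real.cos (3 * Real.pi / nR) := by
  have hπ := Real.pi_pos
  have hn0 : 0 < nR := by linarith
  have hq : 0 < Real.pi / nR := by positivity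
  have hmain : nR * (Real.pi / nR) = Real.pi := mul_div_cancel₀ _ (ne_of_gt hn0)
  have hx' : x * Real.pi / nR = x * (Real.pi / nR) := by ring
  have h3' : 3 * Real.pi / nR = 3 * (Real.pi / nR) := by ring
  rcases le_or_gt (x * Real.pi / nR) Real.pi with hle | hgt
  · apply Real.cos_le_cos_of_nonneg_of_le_pi (by positivity) hle
    rw [hx', h3']
    nlinarith
  · rw [← Real.cos_two_pi_sub]
    apply Real.cos_le_cos_of_nonneg_of_le_pi (by positivity) (by linarith)
    rw [hx', h3'] at *
    nlinarith [mul_le_mul_of_nonneg_right hx hq.le]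

lemma list5 {α : Type*} (l : List α) (h : l.length = 5) :
    ∃ a b c d e : α, l = [a,b,c,d,e] := by
  rcases l with _|⟨a, _|⟨b, _|⟨c, _|⟨d, _|⟨e, _|⟨f, l⟩⟩⟩⟩⟩⟩ <;> simp at h
  exact ⟨a,b,c,d,e,rfl⟩

end Stmt16Aux

open Stmt16Aux

/-- Let `p 0, …, p (m-1)` be the vertices of a regular `m`-gon (`m ≥ 5`) centered at
the origin (radius `ρ > 0`, phase `φ`), and for `λ ∈ (0,1)` consider the `m` open
trapezoidal "ring" regions between the `m`-gon and its homothetic copy `λ·P`: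
the interiors of the convex hulls of `{p i, p (i+1), λ p i, λ p (i+1)}`.
If `λ` is close enough to `1` (depending only on `m`), every straight line meets
the interiors of at most `4` of these ring regions. -/
theorem stmt16 (m : ℕ) [NeZero m] (hm : 5 ≤ m) (ρ φ : ℝ) (hρ : 0 < ρ)
    (p : Fin m → E2)
    (hp : ∀ i : Fin m, p i = (WithLp.equiv 2 (Fin 2 → ℝ)).symm
      ![ρ * Real.cos (φ + 2 * Real.pi * (i : ℕ) / m),
        ρ * Real.sin (φ + 2 * Real.pi * (i : ℕ) / m)]) :
    ∃ lam0 : ℝ, 0 < lam0 ∧ lam0 < 1 ∧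
      ∀ lam : ℝ, lam0 < lam → lam < 1 →
        ∀ q d : E2, d ≠ 0 →
          {i : Fin m | ∃ t : ℝ, q + t • d ∈
            interior (convexHull ℝ
              {p i, p (i + 1), lam • p i, lam • p (i + 1)})}.ncard ≤ 4 := by
  classical
  have hπ := Real.pi_pos
  have hm5 : (5:ℝ) ≤ (m:ℝ) := by exact_mod_cast hm
  have hm0 : (0:ℝ) < (m:ℝ) := by linarith
  have hmne : (m:ℝ) ≠ 0 := ne_of_gt hm0
  have hpV : ∀ i : Fin m, p i = V m ρ φ i.val := fun i => hp i
  -- positivity of cos(π/m) and the strict gap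
  have hc : 0 < Real.cos (Real.pi / m) := by
    apply Real.cos_pos_of_mem_Ioo
    constructor
    · have : 0 < Real.pi / m := by positivity
      linarith
    · rw [div_lt_div_iff₀ hm0 (by norm_num : (0:ℝ) < 2)]
      nlinarith
  have hs3 : Real.cos (3 * Real.pi / m) < Real.cos (Real.pi / m) := by
    apply Real.cos_lt_cos_of_nonneg_of_le_pi (by positivity)
    · rw [div_le_iff₀ hm0]; nlinarith
    · rw [div_lt_div_iff₀ hm0 hm0]; nlinarith
  refine ⟨max (Real.cos (3 * Real.pi / m) / Real.cos (Real.pi / m)) (1/2),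
    lt_max_of_lt_right (by norm_num), max_lt ((div_lt_one hc).2 hs3) (by norm_num), ?_⟩
  intro lam hl0 hl1 q d hd
  have hlam_pos : 0 < lam := lt_trans (by norm_num) (lt_of_le_of_lt (le_max_right _ _) hl0)
  have hgap : ρ * Real.cos (3 * Real.pi / m) < lam * (ρ * Real.cos (Real.pi / m)) := by
    have h1 : Real.cos (3 * Real.pi / m) / Real.cos (Real.pi / m) < lam :=
      lt_of_le_of_lt (le_max_left _ _) hl0
    rw [div_lt_iff₀ hc] at h1
    nlinarith
  -- linearity of inner products
  have hlin : ∀ u : E2, IsLinearMap ℝ (fun x : E2 => ⟪x, u⟫) := fun u =>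
    ⟨fun a b => inner_add_left a b u, fun r a => real_inner_smul_left a u r⟩
  -- value of (i+1).val
  have hsucc : ∀ i : Fin m, ∃ q1 : ℕ, i.val + 1 = m * q1 + ((i + 1 : Fin m)).val := by
    intro i
    refine ⟨(i.val + 1) / m, ?_⟩
    have h1 : ((i + 1 : Fin m)).val = (i.val + (1:Fin m).val) % m := Fin.val_add _ _
    have h2 : (1 : Fin m).val = 1 := by
      rw [Fin.val_one']; exact Nat.mod_eq_of_lt (by omega)
    rw [h1, h2]
    exact (Nat.div_add_mod _ _).symm
  -- Fact A : on the hull of trapezoid i, ⟪x, U i⟫ ≥ lam ρ cos(π/m)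
  have hFactA : ∀ i : Fin m,
      ∀ x ∈ convexHull ℝ {p i, p (i + 1), lam • p i, lam • p (i + 1)},
        lam * (ρ * Real.cos (Real.pi / m)) ≤ ⟪x, U m φ i.val⟫ := by
    intro i
    have hcvx : Convex ℝ {x : E2 | lam * (ρ * Real.cos (Real.pi / m)) ≤ ⟪x, U m φ i.val⟫} :=
      convex_halfSpace_ge (hlin _) _
    intro x hx
    refine convexHull_min ?_ hcvx hx
    obtain ⟨q1, hq1⟩ := hsucc i
    have houter : ⟪V m ρ φ i.val, U m φ i.val⟫ = ρ * Real.cos (Real.pi / m) := by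
      rw [innerVU m hmne, show (2*(i.val:ℝ) - 2*i.val - 1) * Real.pi / m = -(Real.pi/m) from by
        ring, Real.cos_neg]
    have houter' : ⟪V m ρ φ ((i+1:Fin m)).val, U m φ i.val⟫ = ρ * Real.cos (Real.pi / m) := by
      rw [innerVU m hmne, cos_shift (m:ℝ) _ 1 (-(q1:ℤ)) hmne (by push_cast; linarith
        [show ((i.val:ℝ) + 1) = (m:ℝ) * q1 + (((i+1:Fin m)).val:ℝ) from by exact_mod_cast hq1]),
        show (1:ℝ) * Real.pi / m = Real.pi / m from by ring]
    intro y hy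
    simp only [Set.mem_insert_iff, Set.mem_singleton_iff] at hy
    have hle : lam * (ρ * Real.cos (Real.pi / m)) ≤ ρ * Real.cos (Real.pi / m) := by
      nlinarith [mul_pos hρ hc]
    rcases hy with rfl | rfl | rfl | rfl
    · show lam * (ρ * Real.cos (Real.pi / m)) ≤ ⟪p i, U m φ i.val⟫
      rw [hpV i, houter]; exact hle
    · show lam * (ρ * Real.cos (Real.pi / m)) ≤ ⟪p (i+1), U m φ i.val⟫
      rw [hpV (i+1), houter']; exact hle
    · show lam * (ρ * Real.cos (Real.pi / m)) ≤ ⟪lam • p i, U m φ i.val⟫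
      rw [hpV i, real_inner_smul_left, houter]
    · show lam * (ρ * Real.cos (Real.pi / m)) ≤ ⟪lam • p (i+1), U m φ i.val⟫
      rw [hpV (i+1), real_inner_smul_left, houter']
  -- Fact B : if i, j are cyclically non-adjacent, the hull of trapezoid i is strictly
  -- below the level lam ρ cos(π/m) in the direction U j
  have hFactB : ∀ i j : Fin m, (i ≠ j ∧ i ≠ j + 1 ∧ j ≠ i + 1) →
      ∀ x ∈ convexHull ℝ {p i, p (i + 1), lam • p i, lam • p (i + 1)},
        ⟪x, U m φ j.val⟫ < lam * (ρ * Real.cos (Real.pi / m)) := by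
    intro i j hna
    set k := (i - j).val with hk
    have hklt : k < m := (i - j).isLt
    have hk0 : k ≠ 0 := by
      intro h
      exact hna.1 (sub_eq_zero.mp (Fin.ext (h.trans (Fin.val_zero m).symm)))
    have hone : (1 : Fin m).val = 1 := by
      rw [Fin.val_one']; exact Nat.mod_eq_of_lt (by omega)
    have hk1 : k ≠ 1 := by
      intro h
      have : i - j = 1 := Fin.ext (h.trans hone.symm)
      exact hna.2.1 (by rw [← sub_add_cancel i j, this]; exact add_comm 1 j)
    have hkm1 : k ≠ m - 1 := by
      intro h
      have hsum : (i - j) + (j - i) = 0 := by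
        rw [sub_add_sub_cancel, sub_self]
      have hval : ((i - j).val + (j - i).val) % m = 0 := by
        rw [← Fin.val_add, hsum, Fin.val_zero]
      have hdvd : m ∣ (k + (j - i).val) := Nat.dvd_of_mod_eq_zero hval
      obtain ⟨cq, hcq⟩ := hdvd
      have hlt2 : (j - i).val < m := (j - i).isLt
      have hji : (j - i).val = 1 := by
        rcases Nat.lt_or_ge cq 2 with hcq2 | hcq2
        · interval_cases cq <;> omega
        · nlinarith
      have : j - i = 1 := Fin.ext (hji.trans hone.symm)
      exact hna.2.2 (by rw [← sub_add_cancel j i, this]; exact add_comm 1 i)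
    have hk2 : 2 ≤ k := by omega
    have hkm2 : k + 2 ≤ m := by omega
    -- integer congruence : i.val = k + j.val - m * Q
    obtain ⟨Q, hQ⟩ : ∃ Q : ℕ, k + j.val = m * Q + i.val := by
      refine ⟨(k + j.val) / m, ?_⟩
      have h1 : (i - j) + j = i := sub_add_cancel i j
      have h2 : (k + j.val) % m = i.val := by
        have h3 := congrArg Fin.val h1
        rwa [Fin.val_add] at h3
      rw [← h2]
      exact (Nat.div_add_mod _ _).symm
    obtain ⟨q1, hq1⟩ := hsucc i
    have hQr : ((k:ℝ) + j.val) = (m:ℝ) * Q + i.val := by exact_mod_cast hQ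
    have hq1r : ((i.val:ℝ) + 1) = (m:ℝ) * q1 + (((i+1:Fin m)).val:ℝ) := by exact_mod_cast hq1
    -- the two cosine bounds
    have hb1 : Real.cos ((2*(i.val:ℝ) - 2*j.val - 1) * Real.pi / m)
        ≤ Real.cos (3 * Real.pi / m) := by
      rw [cos_shift (m:ℝ) _ (2*(k:ℝ) - 1) (-(Q:ℤ)) hmne (by push_cast; linarith)]
      apply cos_bound (m:ℝ) hm5
      · have : (2:ℝ) ≤ (k:ℝ) := by exact_mod_cast hk2
        linarith
      · have : (k:ℝ) + 2 ≤ (m:ℝ) := by exact_mod_cast hkm2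
        linarith
    have hb2 : Real.cos ((2*((((i+1:Fin m)).val):ℝ) - 2*j.val - 1) * Real.pi / m)
        ≤ Real.cos (3 * Real.pi / m) := by
      rw [cos_shift (m:ℝ) _ (2*(k:ℝ) + 1) (-(Q:ℤ) - q1) hmne (by push_cast; linarith)]
      apply cos_bound (m:ℝ) hm5
      · have : (2:ℝ) ≤ (k:ℝ) := by exact_mod_cast hk2
        linarith
      · have : (k:ℝ) + 2 ≤ (m:ℝ) := by exact_mod_cast hkm2
        linarith
    have hcvx : Convex ℝ {x : E2 | ⟪x, U m φ j.val⟫ < lam * (ρ * Real.cos (Real.pi / m))} :=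
      convex_halfSpace_lt (hlin _) _
    intro x hx
    refine convexHull_min ?_ hcvx hx
    intro y hy
    simp only [Set.mem_insert_iff, Set.mem_singleton_iff] at hy
    rcases hy with rfl | rfl | rfl | rfl
    · show ⟪p i, U m φ j.val⟫ < lam * (ρ * Real.cos (Real.pi / m))
      rw [hpV i, innerVU m hmne]
      linarith [mul_le_mul_of_nonneg_left hb1 hρ.le, hgap]
    · show ⟪p (i+1), U m φ j.val⟫ < lam * (ρ * Real.cos (Real.pi / m))
      rw [hpV (i+1), innerVU m hmne]
      linarith [mul_le_mul_of_nonneg_left hb2 hρ.le, hgap]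
    · show ⟪lam • p i, U m φ j.val⟫ < lam * (ρ * Real.cos (Real.pi / m))
      rw [hpV i, real_inner_smul_left, innerVU m hmne]
      linarith [mul_le_mul_of_nonneg_left hb1 (mul_pos hlam_pos hρ).le,
        mul_lt_mul_of_pos_left hs3 (mul_pos hlam_pos hρ)]
    · show ⟪lam • p (i+1), U m φ j.val⟫ < lam * (ρ * Real.cos (Real.pi / m))
      rw [hpV (i+1), real_inner_smul_left, innerVU m hmne]
      linarith [mul_le_mul_of_nonneg_left hb2 (mul_pos hlam_pos hρ).le,
        mul_lt_mul_of_pos_left hs3 (mul_pos hlam_pos hρ)]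
  -- now the counting argument
  by_contra hcon
  push_neg at hcon
  obtain ⟨T, hTS, hT5⟩ := Set.exists_subset_card_eq (show 5 ≤
    Set.ncard {i : Fin m | ∃ t : ℝ, q + t • d ∈ interior (convexHull ℝ
      {p i, p (i + 1), lam • p i, lam • p (i + 1)})} by omega)
  -- choose parameters
  let tfun : Fin m → ℝ := fun i =>
    if h : ∃ t : ℝ, q + t • d ∈ interior (convexHull ℝ
      {p i, p (i + 1), lam • p i, lam • p (i + 1)}) then h.choose else 0
  have hxin : ∀ i : Fin m, (∃ t : ℝ, q + t • d ∈ interior (convexHull ℝ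
      {p i, p (i + 1), lam • p i, lam • p (i + 1)})) →
      q + tfun i • d ∈ convexHull ℝ {p i, p (i + 1), lam • p i, lam • p (i + 1)} := by
    intro i hi
    have : tfun i = hi.choose := dif_pos hi
    rw [this]
    exact interior_subset hi.choose_spec
  -- the key three-point exclusion
  have hkey : ∀ i j k : Fin m,
      (∃ t : ℝ, q + t • d ∈ interior (convexHull ℝ
        {p i, p (i + 1), lam • p i, lam • p (i + 1)})) →
      (∃ t : ℝ, q + t • d ∈ interior (convexHull ℝ
        {p j, p (j + 1), lam • p j, lam • p (j + 1)})) →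
      (∃ t : ℝ, q + t • d ∈ interior (convexHull ℝ
        {p k, p (k + 1), lam • p k, lam • p (k + 1)})) →
      tfun i ≤ tfun j → tfun j ≤ tfun k →
      (i ≠ j ∧ i ≠ j + 1 ∧ j ≠ i + 1) → (k ≠ j ∧ k ≠ j + 1 ∧ j ≠ k + 1) → False := by
    intro i j k hi hj hk hij hjk hnai hnak
    have hBi := hFactB i j hnai _ (hxin i hi)
    have hBk := hFactB k j hnak _ (hxin k hk)
    have hAj := hFactA j _ (hxin j hj)
    have hexp : ∀ t : ℝ, ⟪q + t • d, U m φ j.val⟫ = ⟪q, U m φ j.val⟫ + t * ⟪d, U m φ j.val⟫ :=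
      fun t => by rw [inner_add_left, real_inner_smul_left]
    rw [hexp] at hBi hBk hAj
    rcases le_total 0 (⟪d, U m φ j.val⟫) with hD | hD
    · nlinarith [mul_le_mul_of_nonneg_right hjk hD]
    · nlinarith [mul_le_mul_of_nonpos_right hij hD]
  -- turn T into a sorted list of 5 distinct indices
  have hTfin : T.Finite := T.toFinite
  let F : Finset (Fin m) := hTfin.toFinset
  have hFcard : F.card = 5 := by
    rw [← hT5]
    exact (Set.ncard_eq_toFinset_card T hTfin).symm
  let r : Fin m → Fin m → Prop := fun i j => tfun i < tfun j ∨ (tfun i = tfun j ∧ i ≤ j)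
  haveI : DecidableRel r := Classical.decRel _
  haveI : IsTrans (Fin m) r := ⟨by
    intro a b c hab hbc
    rcases hab with h1 | ⟨h1, h1'⟩ <;> rcases hbc with h2 | ⟨h2, h2'⟩
    · exact Or.inl (h1.trans h2)
    · exact Or.inl (h2 ▸ h1)
    · exact Or.inl (h1 ▸ h2)
    · exact Or.inr ⟨h1.trans h2, h1'.trans h2'⟩⟩
  haveI : IsAntisymm (Fin m) r := ⟨by
    intro a b hab hba
    rcases hab with h1 | ⟨h1, h1'⟩ <;> rcases hba with h2 | ⟨h2, h2'⟩
    · exact absurd (h1.trans h2) (lt_irrefl _)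
    · exact absurd h2 h1.ne'
    · exact absurd h1 h2.ne'
    · exact le_antisymm h1' h2'⟩
  haveI : IsTotal (Fin m) r := ⟨by
    intro a b
    rcases lt_trichotomy (tfun a) (tfun b) with h | h | h
    · exact Or.inl (Or.inl h)
    · rcases le_total a b with h' | h'
      · exact Or.inl (Or.inr ⟨h, h'⟩)
      · exact Or.inr (Or.inr ⟨h.symm, h'⟩)
    · exact Or.inr (Or.inl h)⟩
  obtain ⟨a, b, c, e, f, hl⟩ := list5 (F.sort r) ((Finset.length_sort r).trans hFcard)
  have hsorted : List.Pairwise r (F.sort r) := by apply Finset.pairwise_sort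
  have hnd := Finset.sort_nodup F r
  rw [hl] at hsorted hnd
  have hmemS : ∀ x : Fin m, x ∈ [a,b,c,e,f] → (∃ t : ℝ, q + t • d ∈ interior (convexHull ℝ
      {p x, p (x + 1), lam • p x, lam • p (x + 1)})) := by
    intro x hx
    have : x ∈ F.sort r := by rw [hl]; exact hx
    rw [Finset.mem_sort] at this
    have : x ∈ T := by simpa [F] using this
    exact hTS this
  have hSa := hmemS a (by simp)
  have hSb := hmemS b (by simp)
  have hSc := hmemS c (by simp)
  have hSe := hmemS e (by simp)
  have hSf := hmemS f (by simp)
  simp only [List.pairwise_cons, List.mem_cons, List.not_mem_nil, or_false,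
    List.mem_singleton, forall_eq_or_imp, forall_eq, List.Pairwise.nil, and_true] at hsorted
  simp only [List.nodup_cons, List.mem_cons, List.not_mem_nil, or_false,
    List.mem_singleton, List.nodup_nil, and_true, not_or] at hnd
  obtain ⟨⟨rab, rac, rae, raf⟩, ⟨rbc, rbe, rbf⟩, ⟨rce, rcf⟩, ref, -⟩ := hsorted
  obtain ⟨⟨hab, hac, hae, haf⟩, ⟨hbc, hbe, hbf⟩, ⟨hce, hcf⟩, hef, -⟩ := hnd
  have hrle : ∀ x y : Fin m, r x y → tfun x ≤ tfun y := by
    intro x y h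
    rcases h with h | ⟨h, _⟩
    · exact h.le
    · exact h.le
  -- Fin m arithmetic helpers
  open scoped Fin.NatCast in
  have hg1 : ((1:ℕ) : Fin m) ≠ 0 := by
    intro h
    rw [Fin.natCast_eq_zero] at h
    exact absurd (Nat.le_of_dvd (by norm_num) h) (by omega)
  open scoped Fin.NatCast in
  have hg3 : ((3:ℕ) : Fin m) ≠ 0 := by
    intro h
    rw [Fin.natCast_eq_zero] at h
    exact absurd (Nat.le_of_dvd (by norm_num) h) (by omega)
  open scoped Fin.NatCast in
  have hone : (1 : Fin m) = ((1:ℕ) : Fin m) := by norm_cast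
  have hg1' : ∀ x : Fin m, x + 1 ≠ x := by
    intro x h
    have h1 : (1 : Fin m) = 0 := by
      rw [← add_sub_cancel_left x 1, h, sub_self]
    exact hg1 (by rw [← hone]; exact h1)
  have hg3' : ∀ x : Fin m, x + 1 + 1 + 1 ≠ x := by
    intro x h
    open scoped Fin.CommRing in
    have h' : x + (1 + 1 + 1) = x := (by ring : x + (1 + 1 + 1) = x + 1 + 1 + 1).trans h
    have h3 : (1 + 1 + 1 : Fin m) = 0 := by
      rw [← add_sub_cancel_left x (1 + 1 + 1), h', sub_self]
    apply hg3
    open scoped Fin.NatCast Fin.CommRing in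
    rw [show ((3:ℕ) : Fin m) = 1 + 1 + 1 from by push_cast; ring, h3]
  -- pigeonhole : three distinct elements cannot all be neighbours of b0
  have hpig : ∀ b0 w1 w2 w3 : Fin m, w1 ≠ w2 → w1 ≠ w3 → w2 ≠ w3 →
      (w1 = b0 + 1 ∨ b0 = w1 + 1) → (w2 = b0 + 1 ∨ b0 = w2 + 1) →
      (w3 = b0 + 1 ∨ b0 = w3 + 1) → False := by
    intro b0 w1 w2 w3 h12 h13 h23 p1 p2 p3
    rcases p1 with h1 | h1 <;> rcases p2 with h2 | h2 <;> rcases p3 with h3 | h3 <;>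
      first
        | exact h12 (h1.trans h2.symm)
        | exact h13 (h1.trans h3.symm)
        | exact h23 (h2.trans h3.symm)
        | exact h12 (add_right_cancel (h1.symm.trans h2))
        | exact h13 (add_right_cancel (h1.symm.trans h3))
        | exact h23 (add_right_cancel (h2.symm.trans h3))
  -- two adjacent pairs around a common centre are impossible
  have hsq : ∀ c0 x y : Fin m, x ≠ y →
      (x = c0 + 1 ∨ c0 = x + 1) → (y = c0 + 1 ∨ c0 = y + 1) →
      (x = y + 1 ∨ y = x + 1) → False := by
    intro c0 x y hxy p1 p2 p3
    rcases p1 with h1 | h1 <;> rcases p2 with h2 | h2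
    · exact hxy (h1.trans h2.symm)
    · -- x = c0+1, c0 = y+1 : x = y+2
      have hx : x = y + 1 + 1 := by rw [h1, h2]
      rcases p3 with h3 | h3
      · exact hg1' (y+1) (hx.symm.trans h3)
      · exact hg3' x (by rw [h3] at hx; exact hx.symm)
    · have hy : y = x + 1 + 1 := by rw [h2, h1]
      rcases p3 with h3 | h3
      · exact hg3' x (by rw [hy] at h3; exact h3.symm)
      · exact hg1' (x+1) (hy.symm.trans h3)
    · exact hxy (add_right_cancel (h1.symm.trans h2))
  -- step 1 : a and b are adjacent
  have hadjab : a = b + 1 ∨ b = a + 1 := by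
    by_contra hcontra
    push_neg at hcontra
    have hnaab : a ≠ b ∧ a ≠ b + 1 ∧ b ≠ a + 1 := ⟨hab, hcontra.1, hcontra.2⟩
    have hnb : ∀ w : Fin m, w ≠ b →
        (∃ t : ℝ, q + t • d ∈ interior (convexHull ℝ
          {p w, p (w + 1), lam • p w, lam • p (w + 1)})) →
        tfun b ≤ tfun w → (w = b + 1 ∨ b = w + 1) := by
      intro w hw hSw htw
      by_contra hw'
      push_neg at hw'
      exact hkey a b w hSa hSb hSw (hrle _ _ rab) htw hnaab ⟨hw, hw'.1, hw'.2⟩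
    exact hpig b c e f hce hcf hef
      (hnb c (fun h => hbc h.symm) hSc (hrle _ _ rbc))
      (hnb e (fun h => hbe h.symm) hSe (hrle _ _ rbe))
      (hnb f (fun h => hbf h.symm) hSf (hrle _ _ rbf))
  -- step 2 : e and f are adjacent
  have hadjef : e = f + 1 ∨ f = e + 1 := by
    by_contra hcontra
    push_neg at hcontra
    have hnafe : f ≠ e ∧ f ≠ e + 1 ∧ e ≠ f + 1 := ⟨fun h => hef h.symm, hcontra.2, hcontra.1⟩
    have hne' : ∀ w : Fin m, w ≠ e →
        (∃ t : ℝ, q + t • d ∈ interior (convexHull ℝ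
          {p w, p (w + 1), lam • p w, lam • p (w + 1)})) →
        tfun w ≤ tfun e → (w = e + 1 ∨ e = w + 1) := by
      intro w hw hSw htw
      by_contra hw'
      push_neg at hw'
      exact hkey w e f hSw hSe hSf htw (hrle _ _ ref) ⟨hw, hw'.1, hw'.2⟩ hnafe
    exact hpig e a b c hab hac hbc
      (hne' a hae hSa (hrle _ _ rae))
      (hne' b hbe hSb (hrle _ _ rbe))
      (hne' c hce hSc (hrle _ _ rce))
  -- step 3 : the middle element c
  by_cases hA : (a = c + 1 ∨ c = a + 1)
  · by_cases hB : (b = c + 1 ∨ c = b + 1)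
    · exact hsq c a b hab hA hB hadjab
    · push_neg at hB
      -- b is non-adjacent to c and before it; need a non-adjacent after element
      by_cases hD : (e = c + 1 ∨ c = e + 1)
      · by_cases hE : (f = c + 1 ∨ c = f + 1)
        · exact hsq c e f hef hD hE hadjef
        · push_neg at hE
          exact hkey b c f hSb hSc hSf (hrle _ _ rbc) (hrle _ _ rcf)
            ⟨hbc, hB.1, hB.2⟩ ⟨fun h => hcf h.symm, hE.1, hE.2⟩
      · push_neg at hD
        exact hkey b c e hSb hSc hSe (hrle _ _ rbc) (hrle _ _ rce)
          ⟨hbc, hB.1, hB.2⟩ ⟨fun h => hce h.symm, hD.1, hD.2⟩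
  · push_neg at hA
    by_cases hD : (e = c + 1 ∨ c = e + 1)
    · by_cases hE : (f = c + 1 ∨ c = f + 1)
      · exact hsq c e f hef hD hE hadjef
      · push_neg at hE
        exact hkey a c f hSa hSc hSf (hrle _ _ rac) (hrle _ _ rcf)
          ⟨hac, hA.1, hA.2⟩ ⟨fun h => hcf h.symm, hE.1, hE.2⟩
    · push_neg at hD
      exact hkey a c e hSa hSc hSe (hrle _ _ rac) (hrle _ _ rce)
        ⟨hac, hA.1, hA.2⟩ ⟨fun h => hce h.symm, hD.1, hD.2⟩
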